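/- Let $n \ge 2$ and let $u \in H^1(\mathbb{R}^n)$ be radially symmetric. Then for every $R > 0$ there is a constant $C = C(n)$ (independent of $u$ and $R$) such that $\|u\|_{L^\infty(|x| \ge R)} \le C\, R^{-(n-1)/2}\, \|\nabla u\|_{L^2(\mathbb{R}^n)}^{1/2}\, \|u\|_{L^2(\mathbb{R}^n)}^{1/2}$. -/

import Mathlib

open Set MeasureTheory Metric
open scoped ENNReal

local notation "dim" => Module.finrank ℝ

lemma lintegral_fun_norm_addHaar' {E : Type*} [NormedAddCommGroup E] [NormedSpace ℝ E]
    [MeasurableSpace E] [BorelSpace E] [Nontrivial E] (μ : Measure E) [FiniteDimensional ℝ E]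
    [μ.IsAddHaarMeasure] (f : ℝ → ℝ≥0∞) (hf : Measurable f) :
    ∫⁻ x, f ‖x‖ ∂μ =
      μ.toSphere univ * ∫⁻ r in Ioi (0:ℝ), ENNReal.ofReal (r ^ (dim E - 1)) * f r := by
  have h0 : μ {(0:E)} = 0 := measure_singleton 0
  have hm1 : Measurable fun x : ({0}ᶜ : Set E) => f ‖(x:E)‖ := by fun_prop
  have hm2 : Measurable fun p : sphere (0:E) 1 × Ioi (0:ℝ) => f p.2 := by fun_prop
  have hm3 : Measurable fun r : Ioi (0:ℝ) => f r := by fun_prop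
  calc
    ∫⁻ x, f ‖x‖ ∂μ = ∫⁻ x in ({0}ᶜ : Set E), f ‖x‖ ∂μ := by
      rw [← lintegral_add_compl (fun x => f ‖x‖) (MeasurableSet.singleton (0:E))]
      rw [setLIntegral_measure_zero _ _ h0, zero_add]
    _ = ∫⁻ x : ({0}ᶜ : Set E), f ‖(x:E)‖ ∂(μ.comap Subtype.val) := by
      rw [show (μ.comap Subtype.val : Measure ({0}ᶜ : Set E)) =
          (μ.comap Subtype.val).restrict univ from (Measure.restrict_univ).symm,
        setLIntegral_subtype (MeasurableSet.singleton (0:E)).compl univ (fun x => f ‖x‖),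
        image_univ, Subtype.range_coe]
    _ = ∫⁻ p : sphere (0:E) 1 × Ioi (0:ℝ), f p.2
          ∂(μ.toSphere.prod (.volumeIoiPow (dim E - 1))) := by
      rw [← (μ.measurePreserving_homeomorphUnitSphereProd).lintegral_comp hm2]
      simp only [homeomorphUnitSphereProd_apply_snd_coe]
    _ = μ.toSphere univ * ∫⁻ r : Ioi (0:ℝ), f r ∂(Measure.volumeIoiPow (dim E - 1)) := by
      rw [lintegral_prod _ hm2.aemeasurable]
      simp [lintegral_const, mul_comm]
    _ = μ.toSphere univ * ∫⁻ r : Ioi (0:ℝ),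
          ENNReal.ofReal ((r:ℝ) ^ (dim E - 1)) * f r ∂(Measure.comap Subtype.val volume) := by
      congr 1
      rw [Measure.volumeIoiPow, lintegral_withDensity_eq_lintegral_mul _ (by fun_prop) hm3]
      rfl
    _ = _ := by
      congr 1
      rw [show ((volume : Measure ℝ).comap Subtype.val : Measure (Ioi (0:ℝ))) =
          ((volume : Measure ℝ).comap Subtype.val).restrict univ from (Measure.restrict_univ).symm,
        setLIntegral_subtype measurableSet_Ioi univ
          (fun r => ENNReal.ofReal (r ^ (dim E - 1)) * f r),
        image_univ, Subtype.range_coe]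


lemma radial_fderiv_norm {E : Type*} [NormedAddCommGroup E] [InnerProductSpace ℝ E]
    (u : E → ℂ) (v : ℝ → ℂ) (huv : ∀ x, u x = v ‖x‖) (hu : Differentiable ℝ u)
    {x y : E} (h : ‖x‖ = ‖y‖) : ‖fderiv ℝ u x‖ = ‖fderiv ℝ u y‖ := by
  set Q : E ≃ₗᵢ[ℝ] E := Submodule.reflection (Submodule.span ℝ {x - y})ᗮ with hQdef
  have hQ : u ∘ Q = u := by
    funext z
    simp only [Function.comp_apply, huv, Q.norm_map]
  have hQx : Q x = y := Submodule.reflection_sub h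
  have h2 : HasFDerivAt (⇑Q) (Q.toLinearIsometry.toContinuousLinearMap) x :=
    Q.toLinearIsometry.toContinuousLinearMap.hasFDerivAt
  have h3 : HasFDerivAt (u ∘ ⇑Q)
      ((fderiv ℝ u (Q x)).comp Q.toLinearIsometry.toContinuousLinearMap) x :=
    (hu (Q x)).hasFDerivAt.comp x h2
  rw [hQ] at h3
  rw [h3.fderiv, ← hQx]
  exact ContinuousLinearMap.opNorm_comp_linearIsometryEquiv _ Q

open intervalIntegral NNReal in

lemma strauss_oneDim (n : ℕ) (hn : 2 ≤ n) (g : ℝ → ℂ) (hg : Differentiable ℝ g)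
    (W : ℝ → ℝ) (hWm : Measurable W) (hW0 : ∀ r, 0 ≤ W r)
    (hW : ∀ r, ‖deriv g r‖ ≤ W r)
    (JA JB : ℝ≥0∞)
    (hJA : JA = ∫⁻ r in Ioi (0:ℝ), ENNReal.ofReal (r ^ (n-1)) * ENNReal.ofReal (W r) ^ 2)
    (hJB : JB = ∫⁻ r in Ioi (0:ℝ), ENNReal.ofReal (r ^ (n-1)) * (‖g r‖₊ : ℝ≥0∞) ^ 2)
    (hJAfin : JA ≠ ∞) (hJBfin : JB ≠ ∞)
    {ρ : ℝ} (hρ : 0 < ρ) :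
    ENNReal.ofReal (‖g ρ‖ ^ 2 * ρ ^ (n-1)) ≤ 2 * JA ^ ((1:ℝ)/2) * JB ^ ((1:ℝ)/2) := by
  classical
  set F : ℝ → ℝ := fun r => ‖g r‖ ^ 2 * r ^ (n-1) with hF
  set P1 : ℝ → ℝ := fun r => 2 * (inner ℝ (g r) (deriv g r) : ℝ) * r ^ (n-1) with hP1
  set P2 : ℝ → ℝ := fun r => ‖g r‖ ^ 2 * (((n-1 : ℕ) : ℝ) * r ^ (n-2)) with hP2
  have hF' : ∀ r : ℝ, HasDerivAt F (P1 r + P2 r) r := by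
    intro r
    have h1 : HasDerivAt (fun t => ‖g t‖ ^ 2) (2 * (inner ℝ (g r) (deriv g r) : ℝ)) r := by
      have := HasDerivAt.inner ℝ ((hg r).hasDerivAt) ((hg r).hasDerivAt)
      have heq : (fun t => (inner ℝ (g t) (g t) : ℝ)) = fun t => ‖g t‖ ^ 2 := by
        funext t; exact real_inner_self_eq_norm_sq (g t)
      rw [heq] at this
      refine this.congr_deriv ?_
      rw [real_inner_comm (deriv g r) (g r)]; ring
    have h2 : HasDerivAt (fun t : ℝ => t ^ (n-1)) (((n-1 : ℕ) : ℝ) * r ^ (n-2)) r := by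
      have := hasDerivAt_pow (n-1) r
      exact this.congr_deriv (by rw [Nat.sub_sub])
    exact h1.mul h2
  have hgc : Continuous g := hg.continuous
  have hWloc : ∀ T, ρ ≤ T → IntegrableOn W (Ioc ρ T) volume := by
    intro T hT
    have hne : ENNReal.ofReal (ρ ^ (n-1)) ≠ 0 := by
      simp [ENNReal.ofReal_eq_zero, not_le, pow_pos hρ]
    have hkey : ∫⁻ r in Ioc ρ T, ENNReal.ofReal (ρ ^ (n-1)) * ENNReal.ofReal (W r) ^ 2 ≤ JA := by
      rw [hJA]
      refine le_trans (setLIntegral_mono (by fun_prop) ?_)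
        (lintegral_mono_set (fun x hx => lt_trans hρ hx.1))
      intro r hr
      gcongr
      exact hr.1.le
    rw [lintegral_const_mul _ (by fun_prop)] at hkey
    have hfin2 : ∫⁻ r in Ioc ρ T, ENNReal.ofReal (W r) ^ 2 ≠ ∞ := by
      intro hC
      rw [hC, ENNReal.mul_top hne] at hkey
      exact hJAfin (top_le_iff.mp hkey)
    haveI : IsFiniteMeasure (volume.restrict (Ioc ρ T)) :=
      ⟨by rw [Measure.restrict_apply_univ]; exact measure_Ioc_lt_top⟩
    have hmem2 : MemLp W 2 (volume.restrict (Ioc ρ T)) := by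
      refine ⟨hWm.aestronglyMeasurable, ?_⟩
      rw [eLpNorm_eq_lintegral_rpow_enorm_toReal (by norm_num) (by norm_num)]
      refine ENNReal.rpow_lt_top_of_nonneg (by norm_num) ?_
      have : ∀ r : ℝ, ‖W r‖ₑ ^ (2 : ℝ≥0∞).toReal = ENNReal.ofReal (W r) ^ 2 := by
        intro r
        rw [Real.enorm_eq_ofReal (hW0 r),
          show ((2:ℝ≥0∞)).toReal = ((2:ℕ):ℝ) by norm_num, ENNReal.rpow_natCast]
      simp only [this]
      exact hfin2
    exact memLp_one_iff_integrable.mp (MemLp.mono_exponent hmem2 one_le_two)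
  set G : ℝ → ℝ := fun r => 2 * ‖g r‖ * W r * r ^ (n-1) with hG
  have hGmeas : Measurable G := by
    apply Measurable.mul
    apply Measurable.mul
    · exact (hgc.norm.measurable).const_mul 2
    · exact hWm
    · exact (measurable_id.pow_const _)
  have hGnn' : ∀ r : ℝ, 0 < r → 0 ≤ G r := by
    intro r hr
    have := hW0 r
    have := norm_nonneg (g r)
    show (0:ℝ) ≤ 2 * ‖g r‖ * W r * r ^ (n-1)
    positivity
  have hbGall : ∀ T, ρ ≤ T → ∀ Mg : ℝ, (∀ s ∈ Icc ρ T, ‖g s‖ ≤ Mg) →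
      ∀ r ∈ Ioc ρ T, G r ≤ (2 * Mg * T ^ (n-1)) * W r := by
    intro T hT Mg hMg r hr
    have hMg0 : (0:ℝ) ≤ Mg := le_trans (norm_nonneg _) (hMg ρ (left_mem_Icc.mpr hT))
    have h1 : ‖g r‖ ≤ Mg := hMg r (Ioc_subset_Icc_self hr)
    have h2 : (0:ℝ) ≤ r := le_of_lt (lt_trans hρ hr.1)
    have h3 : r ^ (n-1) ≤ T ^ (n-1) := pow_le_pow_left₀ h2 hr.2 _
    have h4 : (0:ℝ) ≤ r ^ (n-1) := pow_nonneg h2 _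
    calc 2 * ‖g r‖ * W r * r ^ (n-1) ≤ 2 * Mg * W r * T ^ (n-1) := by
          apply mul_le_mul
          · exact mul_le_mul (by linarith [norm_nonneg (g r)]) le_rfl (hW0 r)
              (by linarith)
          · exact h3
          · exact h4
          · have := hW0 r
            positivity
      _ = (2 * Mg * T ^ (n-1)) * W r := by ring
  have hGintAll : ∀ T, ρ ≤ T → IntegrableOn G (Ioc ρ T) volume := by
    intro T hT
    obtain ⟨Mg, hMg⟩ := (isCompact_Icc (a := ρ) (b := T)).exists_bound_of_continuousOn
      hgc.continuousOn
    have hdom : IntegrableOn (fun r => (2 * Mg * T ^ (n-1)) * W r) (Ioc ρ T) volume :=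
      (hWloc T hT).const_mul _
    refine Integrable.mono' hdom hGmeas.aestronglyMeasurable ?_
    refine (ae_restrict_iff' measurableSet_Ioc).mpr (ae_of_all _ fun r hr => ?_)
    rw [Real.norm_eq_abs, abs_of_nonneg (hGnn' r (lt_trans hρ hr.1))]
    exact hbGall T hT Mg hMg r hr
  have hstep : ∀ T, ρ ≤ T → F ρ ≤ F T + ∫ r in ρ..T, G r := by
    intro T hT
    obtain ⟨Mg, hMg⟩ := (isCompact_Icc (a := ρ) (b := T)).exists_bound_of_continuousOn
      hgc.continuousOn
    have hTpos : 0 < T := lt_of_lt_of_le hρ hT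
    have hMg0 : (0:ℝ) ≤ Mg := le_trans (norm_nonneg _) (hMg ρ (left_mem_Icc.mpr hT))
    have hWT := hWloc T hT
    have hbP1 : ∀ r ∈ Ioc ρ T,
        |2 * (inner ℝ (g r) (deriv g r) : ℝ) * r ^ (n-1)| ≤ G r := by
      intro r hr
      have h2 : (0:ℝ) ≤ r := le_of_lt (lt_trans hρ hr.1)
      have h4 : (0:ℝ) ≤ r ^ (n-1) := pow_nonneg h2 _
      have h5 : |(inner ℝ (g r) (deriv g r) : ℝ)| ≤ ‖g r‖ * W r :=
        le_trans (abs_real_inner_le_norm _ _)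
          (mul_le_mul_of_nonneg_left (hW r) (norm_nonneg _))
      calc |2 * (inner ℝ (g r) (deriv g r) : ℝ) * r ^ (n-1)|
          = 2 * |(inner ℝ (g r) (deriv g r) : ℝ)| * r ^ (n-1) := by
            rw [abs_mul, abs_mul, abs_of_nonneg h4, abs_two]
        _ ≤ 2 * (‖g r‖ * W r) * r ^ (n-1) := by
            apply mul_le_mul_of_nonneg_right _ h4
            linarith
        _ = G r := by simp only [hG]; ring
    have hGint : IntegrableOn G (Ioc ρ T) volume := hGintAll T hT
    have hP1int : IntegrableOn P1 (Ioc ρ T) volume := by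
      have hP1meas : Measurable P1 := by
        apply Measurable.mul
        · exact (Measurable.inner hgc.measurable (measurable_deriv g)).const_mul 2
        · exact measurable_id.pow_const _
      refine Integrable.mono' hGint hP1meas.aestronglyMeasurable ?_
      refine (ae_restrict_iff' measurableSet_Ioc).mpr (ae_of_all _ fun r hr => ?_)
      rw [Real.norm_eq_abs]
      exact hbP1 r hr
    have hP1ii : IntervalIntegrable P1 volume ρ T :=
      (intervalIntegrable_iff_integrableOn_Ioc_of_le hT).mpr hP1int
    have hP2ii : IntervalIntegrable P2 volume ρ T := by
      apply Continuous.intervalIntegrable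
      have : Continuous fun r : ℝ => ‖g r‖ ^ 2 := (hgc.norm).pow 2
      fun_prop
    have hGii : IntervalIntegrable G volume ρ T :=
      (intervalIntegrable_iff_integrableOn_Ioc_of_le hT).mpr hGint
    have hF'ii : IntervalIntegrable (fun r => P1 r + P2 r) volume ρ T := hP1ii.add hP2ii
    have hftc : ∫ r in ρ..T, (P1 r + P2 r) = F T - F ρ :=
      integral_eq_sub_of_hasDerivAt (fun r _ => hF' r) hF'ii
    have hmono : ∫ r in ρ..T, (-(P1 r + P2 r)) ≤ ∫ r in ρ..T, G r := by
      refine integral_mono_on hT hF'ii.neg hGii fun r hr => ?_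
      have h2 : (0:ℝ) ≤ r := le_trans hρ.le hr.1
      have hP2nn : 0 ≤ P2 r := by
        show (0:ℝ) ≤ ‖g r‖ ^ 2 * (((n-1 : ℕ) : ℝ) * r ^ (n-2))
        positivity
      have h6 : -(P1 r) ≤ G r := by
        rcases hr.1.eq_or_lt with h | h
        · -- r = ρ; still fine: bound directly
          have h5 : |(inner ℝ (g r) (deriv g r) : ℝ)| ≤ ‖g r‖ * W r :=
            le_trans (abs_real_inner_le_norm _ _)
              (mul_le_mul_of_nonneg_left (hW r) (norm_nonneg _))
          have h4 : (0:ℝ) ≤ r ^ (n-1) := pow_nonneg h2 _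
          have : |P1 r| ≤ G r := by
            calc |P1 r| = 2 * |(inner ℝ (g r) (deriv g r) : ℝ)| * r ^ (n-1) := by
                  simp only [hP1]
                  rw [abs_mul, abs_mul, abs_of_nonneg h4, abs_two]
              _ ≤ 2 * (‖g r‖ * W r) * r ^ (n-1) := by
                  apply mul_le_mul_of_nonneg_right _ h4
                  linarith
              _ = G r := by simp only [hG]; ring
          linarith [neg_abs_le (P1 r), this]
        · have := hbP1 r ⟨h, hr.2⟩
          linarith [neg_abs_le (P1 r)]
      linarith
    have hneg : ∫ r in ρ..T, (-(P1 r + P2 r)) = -(∫ r in ρ..T, (P1 r + P2 r)) :=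
      intervalIntegral.integral_neg
    rw [hneg, hftc] at hmono
    linarith
  have hGK : ∀ T, ρ ≤ T →
      ENNReal.ofReal (∫ r in ρ..T, G r) ≤ 2 * JA ^ ((1:ℝ)/2) * JB ^ ((1:ℝ)/2) := by
    intro T hT
    rw [intervalIntegral.integral_of_le hT,
      ofReal_integral_eq_lintegral_ofReal (hGintAll T hT)
        ((ae_restrict_iff' measurableSet_Ioc).mpr
          (ae_of_all _ fun r hr => hGnn' r (lt_trans hρ hr.1)))]
    set a : ℝ → ℝ≥0∞ := fun r => ENNReal.ofReal (r ^ (n-1)) ^ ((1:ℝ)/2) with ha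
    set f1 : ℝ → ℝ≥0∞ := fun r => a r * (‖g r‖₊ : ℝ≥0∞) with hf1
    set f2 : ℝ → ℝ≥0∞ := fun r => a r * ENNReal.ofReal (W r) with hf2
    have hameas : Measurable a := by fun_prop
    have hf1m : Measurable f1 := by
      apply hameas.mul
      exact hgc.measurable.nnnorm.coe_nnreal_ennreal
    have hf2m : Measurable f2 := hameas.mul (hWm.ennreal_ofReal)
    have hkey : ∀ r : ℝ, ENNReal.ofReal (G r) = 2 * (f1 r * f2 r) := by
      intro r
      have haa : a r * a r = ENNReal.ofReal (r ^ (n-1)) := by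
        rw [ha]
        show ENNReal.ofReal (r ^ (n-1)) ^ ((1:ℝ)/2) * ENNReal.ofReal (r ^ (n-1)) ^ ((1:ℝ)/2)
          = ENNReal.ofReal (r ^ (n-1))
        rw [← ENNReal.rpow_add_of_nonneg _ _ (by norm_num) (by norm_num)]
        norm_num
      calc ENNReal.ofReal (G r)
          = ENNReal.ofReal (2 * ‖g r‖ * W r * r ^ (n-1)) := rfl
        _ = ENNReal.ofReal (2 * ‖g r‖ * W r) * ENNReal.ofReal (r ^ (n-1)) := by
            rw [ENNReal.ofReal_mul (by have := hW0 r; positivity)]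
        _ = ENNReal.ofReal (2 * ‖g r‖) * ENNReal.ofReal (W r) * ENNReal.ofReal (r ^ (n-1)) := by
            rw [ENNReal.ofReal_mul (by positivity)]
        _ = 2 * (‖g r‖₊ : ℝ≥0∞) * ENNReal.ofReal (W r) * (a r * a r) := by
            rw [ENNReal.ofReal_mul (by norm_num), ofReal_norm, enorm_eq_nnnorm, haa]
            norm_num
        _ = 2 * (f1 r * f2 r) := by
            simp only [hf1, hf2]
            ring
    calc ∫⁻ r in Ioc ρ T, ENNReal.ofReal (G r)
        ≤ ∫⁻ r in Ioi (0:ℝ), ENNReal.ofReal (G r) :=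
          lintegral_mono_set (fun x hx => lt_trans hρ hx.1)
      _ = 2 * ∫⁻ r in Ioi (0:ℝ), (f1 * f2) r := by
          simp only [hkey]
          rw [← lintegral_const_mul 2 (hf1m.mul hf2m)]
          rfl
      _ ≤ 2 * ((∫⁻ r in Ioi (0:ℝ), f1 r ^ (2:ℝ)) ^ ((1:ℝ)/2) *
            (∫⁻ r in Ioi (0:ℝ), f2 r ^ (2:ℝ)) ^ ((1:ℝ)/2)) := by
          apply mul_le_mul_right
          exact ENNReal.lintegral_mul_le_Lp_mul_Lq _ (Real.HolderConjugate.two_two :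
            Real.HolderConjugate 2 2) hf1m.aemeasurable hf2m.aemeasurable
      _ = 2 * JA ^ ((1:ℝ)/2) * JB ^ ((1:ℝ)/2) := by
          have e1 : ∫⁻ r in Ioi (0:ℝ), f1 r ^ (2:ℝ) = JB := by
            rw [hJB]
            apply lintegral_congr
            intro r
            simp only [hf1, ha]
            rw [ENNReal.mul_rpow_of_nonneg _ _ (by norm_num),
              ← ENNReal.rpow_mul, show ((1:ℝ)/2) * 2 = 1 by norm_num, ENNReal.rpow_one,
              show (2:ℝ) = ((2:ℕ):ℝ) by norm_num, ENNReal.rpow_natCast]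
          have e2 : ∫⁻ r in Ioi (0:ℝ), f2 r ^ (2:ℝ) = JA := by
            rw [hJA]
            apply lintegral_congr
            intro r
            simp only [hf2, ha]
            rw [ENNReal.mul_rpow_of_nonneg _ _ (by norm_num),
              ← ENNReal.rpow_mul, show ((1:ℝ)/2) * 2 = 1 by norm_num, ENNReal.rpow_one,
              show (2:ℝ) = ((2:ℕ):ℝ) by norm_num, ENNReal.rpow_natCast]
          rw [e1, e2]
          ring
  have hsmall : ∀ δ : ℝ, 0 < δ → ∃ T, ρ ≤ T ∧ F T ≤ δ := by
    intro δ hδ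
    by_contra hcon
    push_neg at hcon
    have h1 : ∀ r ∈ Ioi ρ, ENNReal.ofReal δ ≤
        ENNReal.ofReal (r ^ (n-1)) * (‖g r‖₊ : ℝ≥0∞) ^ 2 := by
      intro r hr
      have h2 : δ ≤ F r := (hcon r (le_of_lt hr)).le
      have h2' : (0:ℝ) ≤ r ^ (n-1) := pow_nonneg (le_of_lt (lt_trans hρ hr)) _
      calc ENNReal.ofReal δ ≤ ENNReal.ofReal (F r) := ENNReal.ofReal_le_ofReal h2
        _ = ENNReal.ofReal (r ^ (n-1)) * (‖g r‖₊ : ℝ≥0∞) ^ 2 := by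
          show ENNReal.ofReal (‖g r‖ ^ 2 * r ^ (n-1)) = _
          rw [show ‖g r‖ ^ 2 * r ^ (n-1) = r ^ (n-1) * ‖g r‖ ^ 2 by ring,
            ENNReal.ofReal_mul h2', ENNReal.ofReal_pow (norm_nonneg _),
            ofReal_norm, enorm_eq_nnnorm]
    have h3 := setLIntegral_mono (μ := volume) (s := Ioi ρ)
      (f := fun _ => ENNReal.ofReal δ)
      (g := fun r => ENNReal.ofReal (r ^ (n-1)) * (‖g r‖₊ : ℝ≥0∞) ^ 2)
      (by fun_prop) h1
    rw [setLIntegral_const, Real.volume_Ioi, ENNReal.mul_top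
      (by simp [ENNReal.ofReal_eq_zero, not_le]; linarith)] at h3
    have h4 : JB = ∞ := by
      rw [hJB]
      exact top_le_iff.mp (le_trans h3 (lintegral_mono_set (fun x hx => lt_trans hρ hx)))
    exact hJBfin h4
  have hfinK : 2 * JA ^ ((1:ℝ)/2) * JB ^ ((1:ℝ)/2) ≠ ∞ := by
    apply ENNReal.mul_ne_top
    · exact ENNReal.mul_ne_top (by norm_num)
        (ENNReal.rpow_ne_top_of_nonneg (by norm_num) hJAfin)
    · exact ENNReal.rpow_ne_top_of_nonneg (by norm_num) hJBfin
  have hFK : F ρ ≤ (2 * JA ^ ((1:ℝ)/2) * JB ^ ((1:ℝ)/2)).toReal := by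
    refine le_of_forall_pos_le_add fun ε hε => ?_
    obtain ⟨T, hT, hFT⟩ := hsmall ε hε
    have h1 := hstep T hT
    have h4 : 0 ≤ ∫ r in ρ..T, G r := by
      rw [intervalIntegral.integral_of_le hT]
      exact setIntegral_nonneg measurableSet_Ioc fun r hr => hGnn' r (lt_trans hρ hr.1)
    have h2 : ∫ r in ρ..T, G r ≤ (2 * JA ^ ((1:ℝ)/2) * JB ^ ((1:ℝ)/2)).toReal := by
      calc ∫ r in ρ..T, G r = (ENNReal.ofReal (∫ r in ρ..T, G r)).toReal :=
            (ENNReal.toReal_ofReal h4).symm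
        _ ≤ _ := ENNReal.toReal_mono hfinK (hGK T hT)
    linarith
  calc ENNReal.ofReal (‖g ρ‖ ^ 2 * ρ ^ (n-1))
      ≤ ENNReal.ofReal ((2 * JA ^ ((1:ℝ)/2) * JB ^ ((1:ℝ)/2)).toReal) :=
        ENNReal.ofReal_le_ofReal hFK
    _ = _ := ENNReal.ofReal_toReal hfinK


open MeasureTheory in
theorem radial_strauss_inequality (n : ℕ) (hn : 2 ≤ n) :
    ∃ C > 0, ∀ (u : EuclideanSpace ℝ (Fin n) → ℂ) (v : ℝ → ℂ),
      (∀ x, u x = v ‖x‖) →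
      Differentiable ℝ u →
      MemLp u 2 (volume : Measure (EuclideanSpace ℝ (Fin n))) →
      MemLp (fun x => fderiv ℝ u x) 2 (volume : Measure (EuclideanSpace ℝ (Fin n))) →
      ∀ R : ℝ, 0 < R →
        eLpNorm u ⊤ ((volume : Measure (EuclideanSpace ℝ (Fin n))).restrict {x | R ≤ ‖x‖}) ≤
          ENNReal.ofReal (C * R ^ (-(((n : ℝ) - 1) / 2))) *
            (eLpNorm (fun x => fderiv ℝ u x) 2
                (volume : Measure (EuclideanSpace ℝ (Fin n)))) ^ ((1 : ℝ) / 2) *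
            (eLpNorm u 2 (volume : Measure (EuclideanSpace ℝ (Fin n)))) ^ ((1 : ℝ) / 2) := by
  haveI : Nonempty (Fin n) := ⟨⟨0, by omega⟩⟩
  have sqhalf : ∀ y : ℝ≥0∞, (y ^ ((1:ℝ)/2)) ^ (2:ℕ) = y := by
    intro y
    rw [← ENNReal.rpow_natCast, ← ENNReal.rpow_mul]
    norm_num
  set c : ℝ≥0∞ := (volume : Measure (EuclideanSpace ℝ (Fin n))).toSphere Set.univ with hc
  have hc0 : c ≠ 0 := by
    rw [hc, Measure.toSphere_apply_univ]
    refine mul_ne_zero ?_ ?_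
    · rw [finrank_euclideanSpace_fin]
      simp only [ne_eq, Nat.cast_eq_zero]
      omega
    · exact (measure_ball_pos _ _ one_pos).ne'
  have hctop : c ≠ ∞ := (measure_lt_top _ _).ne
  have hcr : 0 < c.toReal := ENNReal.toReal_pos hc0 hctop
  refine ⟨Real.sqrt (2 / c.toReal), Real.sqrt_pos.mpr (by positivity), ?_⟩
  intro u v huv hu hu2 hdu2 R hR
  set C : ℝ := Real.sqrt (2 / c.toReal) with hCdef
  have hC0 : 0 ≤ C := Real.sqrt_nonneg _
  set e₁ : EuclideanSpace ℝ (Fin n) := EuclideanSpace.single (⟨0, by omega⟩ : Fin n) (1:ℝ) with he₁def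
  have he₁ : ‖e₁‖ = 1 := by rw [he₁def, EuclideanSpace.norm_single]; norm_num
  have hxnorm : ∀ t : ℝ, 0 ≤ t → ‖t • e₁‖ = t := fun t ht => by
    rw [norm_smul, he₁, mul_one, Real.norm_eq_abs, abs_of_nonneg ht]
  set g : ℝ → ℂ := fun r => u (r • e₁) with hgdef
  set W : ℝ → ℝ := fun r => ‖fderiv ℝ u (r • e₁)‖ with hWdef
  have hux : ∀ x, u x = g ‖x‖ := fun x => by
    show u x = u (‖x‖ • e₁)
    rw [huv, huv, hxnorm _ (norm_nonneg x)]
  have hWx : ∀ x, ‖fderiv ℝ u x‖ = W ‖x‖ := fun x =>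
    radial_fderiv_norm u v huv hu ((hxnorm _ (norm_nonneg x)).symm)
  have hgd : ∀ r : ℝ, HasDerivAt g (fderiv ℝ u (r • e₁) e₁) r := by
    intro r
    have h1 : HasDerivAt (fun t : ℝ => t • e₁) ((1:ℝ) • e₁) r := (hasDerivAt_id r).smul_const e₁
    rw [one_smul] at h1
    exact (hu (r • e₁)).hasFDerivAt.comp_hasDerivAt r h1
  have hgdiff : Differentiable ℝ g := fun r => (hgd r).differentiableAt
  have hgm : Measurable g := hgdiff.continuous.measurable
  have hWm : Measurable W := ((measurable_fderiv ℝ u).comp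
    ((continuous_id.smul continuous_const).measurable)).norm
  have hW0 : ∀ r, 0 ≤ W r := fun r => norm_nonneg _
  have hWb : ∀ r, ‖deriv g r‖ ≤ W r := fun r => by
    rw [(hgd r).deriv]
    calc ‖fderiv ℝ u (r • e₁) e₁‖ ≤ ‖fderiv ℝ u (r • e₁)‖ * ‖e₁‖ :=
          ContinuousLinearMap.le_opNorm _ _
      _ = W r := by rw [he₁, mul_one]
  set IA : ℝ≥0∞ := ∫⁻ x, (‖fderiv ℝ u x‖₊ : ℝ≥0∞) ^ 2
    ∂(volume : Measure (EuclideanSpace ℝ (Fin n))) with hIAdef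
  set IB : ℝ≥0∞ := ∫⁻ x, (‖u x‖₊ : ℝ≥0∞) ^ 2
    ∂(volume : Measure (EuclideanSpace ℝ (Fin n))) with hIBdef
  set JA : ℝ≥0∞ := ∫⁻ r in Set.Ioi (0:ℝ),
    ENNReal.ofReal (r ^ (n-1)) * ENNReal.ofReal (W r) ^ 2 with hJAdef
  set JB : ℝ≥0∞ := ∫⁻ r in Set.Ioi (0:ℝ),
    ENNReal.ofReal (r ^ (n-1)) * (‖g r‖₊ : ℝ≥0∞) ^ 2 with hJBdef
  have hIA : IA = c * JA := by
    rw [hIAdef, hJAdef, hc]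
    have hpol := lintegral_fun_norm_addHaar' (volume : Measure (EuclideanSpace ℝ (Fin n)))
      (fun r => ENNReal.ofReal (W r) ^ 2) (by fun_prop)
    rw [finrank_euclideanSpace_fin] at hpol
    rw [← hpol]
    apply lintegral_congr
    intro x
    show (‖fderiv ℝ u x‖₊ : ℝ≥0∞) ^ 2 = ENNReal.ofReal (W ‖x‖) ^ 2
    rw [← hWx x, ← enorm_eq_nnnorm, ← ofReal_norm]
  have hIB : IB = c * JB := by
    rw [hIBdef, hJBdef, hc]
    have hpol := lintegral_fun_norm_addHaar' (volume : Measure (EuclideanSpace ℝ (Fin n)))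
      (fun r => (‖g r‖₊ : ℝ≥0∞) ^ 2) (by fun_prop)
    rw [finrank_euclideanSpace_fin] at hpol
    rw [← hpol]
    apply lintegral_congr
    intro x
    show (‖u x‖₊ : ℝ≥0∞) ^ 2 = (‖g ‖x‖‖₊ : ℝ≥0∞) ^ 2
    rw [hux x]
  have hN1 : eLpNorm (fun x => fderiv ℝ u x) 2
      (volume : Measure (EuclideanSpace ℝ (Fin n))) = IA ^ ((1:ℝ)/2) := by
    rw [eLpNorm_eq_lintegral_rpow_enorm_toReal two_ne_zero ENNReal.ofNat_ne_top, hIAdef]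
    congr 1
    apply lintegral_congr
    intro x
    rw [show ((2:ℝ≥0∞)).toReal = ((2:ℕ):ℝ) by norm_num, ENNReal.rpow_natCast, enorm_eq_nnnorm]
  have hN2 : eLpNorm u 2 (volume : Measure (EuclideanSpace ℝ (Fin n))) = IB ^ ((1:ℝ)/2) := by
    rw [eLpNorm_eq_lintegral_rpow_enorm_toReal two_ne_zero ENNReal.ofNat_ne_top, hIBdef]
    congr 1
    apply lintegral_congr
    intro x
    rw [show ((2:ℝ≥0∞)).toReal = ((2:ℕ):ℝ) by norm_num, ENNReal.rpow_natCast, enorm_eq_nnnorm]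
  have hIAfin : IA ≠ ∞ := by
    intro hT
    have h := hdu2.2
    rw [hN1, hT] at h
    simp [ENNReal.top_rpow_of_pos (by norm_num : (0:ℝ) < 1/2)] at h
  have hIBfin : IB ≠ ∞ := by
    intro hT
    have h := hu2.2
    rw [hN2, hT] at h
    simp [ENNReal.top_rpow_of_pos (by norm_num : (0:ℝ) < 1/2)] at h
  have hJAfin : JA ≠ ∞ := by
    intro hT
    apply hIAfin
    rw [hIA, hT, ENNReal.mul_top hc0]
  have hJBfin : JB ≠ ∞ := by
    intro hT
    apply hIBfin
    rw [hIB, hT, ENNReal.mul_top hc0]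
  have hJAe : JA = c⁻¹ * IA := by
    rw [hIA, ← mul_assoc, ENNReal.inv_mul_cancel hc0 hctop, one_mul]
  have hJBe : JB = c⁻¹ * IB := by
    rw [hIB, ← mul_assoc, ENNReal.inv_mul_cancel hc0 hctop, one_mul]
  set b : ℝ≥0∞ := ENNReal.ofReal (R ^ (n-1)) with hbdef
  have hb0 : b ≠ 0 := by
    rw [hbdef]
    simp only [ne_eq, ENNReal.ofReal_eq_zero, not_le]
    positivity
  have hbtop : b ≠ ∞ := ENNReal.ofReal_ne_top
  set M : ℝ≥0∞ := ENNReal.ofReal (C * R ^ (-(((n : ℝ) - 1) / 2))) *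
      (eLpNorm (fun x => fderiv ℝ u x) 2
        (volume : Measure (EuclideanSpace ℝ (Fin n)))) ^ ((1:ℝ)/2) *
      (eLpNorm u 2 (volume : Measure (EuclideanSpace ℝ (Fin n)))) ^ ((1:ℝ)/2) with hMdef
  have hM2 : M ^ (2:ℕ) = 2 * c⁻¹ * b⁻¹ * (IA ^ ((1:ℝ)/2) * IB ^ ((1:ℝ)/2)) := by
    have hRp : (0:ℝ) ≤ R ^ (-(((n : ℝ) - 1) / 2)) := Real.rpow_nonneg hR.le _
    have hsq : (C * R ^ (-(((n : ℝ) - 1) / 2))) ^ (2:ℕ) = (2 / c.toReal) * (R ^ (n-1))⁻¹ := by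
      rw [mul_pow, Real.sq_sqrt (by positivity), ← Real.rpow_natCast (R ^ _) 2,
        ← Real.rpow_mul hR.le]
      congr 1
      rw [show (-(((n : ℝ) - 1) / 2)) * (2:ℕ) = -((n:ℝ)-1) by push_cast; ring,
        Real.rpow_neg hR.le]
      congr 1
      rw [show ((n:ℝ) - 1) = ((n - 1 : ℕ) : ℝ) by push_cast [Nat.cast_sub (by omega : 1 ≤ n)]; ring,
        Real.rpow_natCast]
    have hofsq : (ENNReal.ofReal (C * R ^ (-(((n : ℝ) - 1) / 2)))) ^ (2:ℕ)
        = 2 * c⁻¹ * b⁻¹ := by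
      rw [← ENNReal.ofReal_pow (by positivity), hsq,
        ENNReal.ofReal_mul (by positivity),
        ENNReal.ofReal_inv_of_pos (pow_pos hR _), ← hbdef,
        ENNReal.ofReal_div_of_pos hcr, ENNReal.ofReal_toReal hctop]
      norm_num
      rw [ENNReal.div_eq_inv_mul]
      ring
    rw [hMdef, hN1, hN2, mul_pow, mul_pow, hofsq, sqhalf, sqhalf]
    ring
  have key : ∀ x : EuclideanSpace ℝ (Fin n), R ≤ ‖x‖ →
      (‖u x‖₊ : ℝ≥0∞) ≤ M := by
    intro x hx
    have hρ : 0 < ‖x‖ := lt_of_lt_of_le hR hx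
    have h1 := strauss_oneDim n hn g hgdiff W hWm hW0 hWb JA JB hJAdef hJBdef hJAfin hJBfin hρ
    have h2 : (‖u x‖₊ : ℝ≥0∞) ^ (2:ℕ) * b ≤ 2 * JA ^ ((1:ℝ)/2) * JB ^ ((1:ℝ)/2) := by
      calc (‖u x‖₊:ℝ≥0∞) ^ (2:ℕ) * b = ENNReal.ofReal (‖g ‖x‖‖ ^ 2 * R ^ (n-1)) := by
            rw [hux x, hbdef, ← enorm_eq_nnnorm, ← ofReal_norm,
              ← ENNReal.ofReal_pow (norm_nonneg _), ← ENNReal.ofReal_mul (by positivity)]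
        _ ≤ ENNReal.ofReal (‖g ‖x‖‖ ^ 2 * ‖x‖ ^ (n-1)) := ENNReal.ofReal_le_ofReal (by
            apply mul_le_mul_of_nonneg_left (pow_le_pow_left₀ hR.le hx _) (by positivity))
        _ ≤ _ := h1
    have h3 : (‖u x‖₊ : ℝ≥0∞) ^ (2:ℕ) ≤ M ^ (2:ℕ) := by
      rw [hM2]
      have h4 : (‖u x‖₊ : ℝ≥0∞) ^ (2:ℕ) ≤ (2 * JA ^ ((1:ℝ)/2) * JB ^ ((1:ℝ)/2)) / b := by
        rw [ENNReal.le_div_iff_mul_le (Or.inl hb0) (Or.inl hbtop)]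
        exact h2
      refine le_trans h4 (le_of_eq ?_)
      rw [hJAe, hJBe, ENNReal.mul_rpow_of_nonneg _ _ (by norm_num),
        ENNReal.mul_rpow_of_nonneg _ _ (by norm_num), div_eq_mul_inv]
      have hcc : (c⁻¹) ^ ((1:ℝ)/2) * (c⁻¹) ^ ((1:ℝ)/2) = c⁻¹ := by
        rw [← ENNReal.rpow_add_of_nonneg _ _ (by norm_num) (by norm_num)]
        norm_num
      calc 2 * ((c⁻¹) ^ ((1:ℝ)/2) * IA ^ ((1:ℝ)/2)) * ((c⁻¹) ^ ((1:ℝ)/2) * IB ^ ((1:ℝ)/2)) * b⁻¹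
          = 2 * ((c⁻¹) ^ ((1:ℝ)/2) * (c⁻¹) ^ ((1:ℝ)/2)) * b⁻¹ *
            (IA ^ ((1:ℝ)/2) * IB ^ ((1:ℝ)/2)) := by ring
        _ = 2 * c⁻¹ * b⁻¹ * (IA ^ ((1:ℝ)/2) * IB ^ ((1:ℝ)/2)) := by rw [hcc]
    calc (‖u x‖₊ : ℝ≥0∞) = ((‖u x‖₊ : ℝ≥0∞) ^ (2:ℕ)) ^ ((1:ℝ)/2) := by
          rw [← ENNReal.rpow_natCast, ← ENNReal.rpow_mul]; norm_num
      _ ≤ (M ^ (2:ℕ)) ^ ((1:ℝ)/2) := ENNReal.rpow_le_rpow h3 (by norm_num)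
      _ = M := by rw [← ENNReal.rpow_natCast, ← ENNReal.rpow_mul]; norm_num
  have hS : MeasurableSet {x : EuclideanSpace ℝ (Fin n) | R ≤ ‖x‖} :=
    (isClosed_le continuous_const continuous_norm).measurableSet
  rw [eLpNorm_exponent_top, eLpNormEssSup]
  exact essSup_le_of_ae_le _ ((ae_restrict_iff' hS).mpr (ae_of_all _ fun x hx => key x hx))
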